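/- Let f, g : {0,1}^n → ℝ be increasing. Then the function ρ ↦ ⟨T_ρ f, g⟩ is non-decreasing on [0,1], where ⟨·,·⟩ denotes the inner product with respect to the uniform measure on {0,1}^n. Equivalently, ρ ↦ Cov(T_ρ f, g) is non-decreasing on [0,1]. -/

import Mathlib

open Finset

/-- Expectation with respect to the uniform measure on `{0,1}^n`. -/
noncomputable def expect (n : ℕ) (f : (Fin n → Bool) → ℝ) : ℝ :=
  (∑ x : Fin n → Bool, f x) / 2 ^ n

/-- The Fourier-Walsh character `u_S`. -/
noncomputable def chi (n : ℕ) (S : Finset (Fin n)) (x : Fin n → Bool) : ℝ :=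
  ∏ i ∈ S, (if x i then (-1 : ℝ) else 1)

/-- Fourier-Walsh coefficient `f̂(S)`. -/
noncomputable def coef (n : ℕ) (f : (Fin n → Bool) → ℝ) (S : Finset (Fin n)) : ℝ :=
  expect n (fun x => f x * chi n S x)

/-- The noise operator: `T_ρ f = Σ_S ρ^{|S|} f̂(S) u_S`. -/
noncomputable def noise (n : ℕ) (ρ : ℝ) (f : (Fin n → Bool) → ℝ) :
    (Fin n → Bool) → ℝ :=
  fun x => ∑ S : Finset (Fin n), ρ ^ S.card * coef n f S * chi n S x

/-- Covariance with respect to the uniform measure. -/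
noncomputable def cov (n : ℕ) (f g : (Fin n → Bool) → ℝ) : ℝ :=
  expect n (fun x => f x * g x) - expect n f * expect n g

/-- `x ⊕ e_k`: flip the k-th coordinate. -/
def flipBit (n : ℕ) (x : Fin n → Bool) (k : Fin n) : Fin n → Bool :=
  Function.update x k (!x k)

section Aux
variable (n : ℕ)

lemma flipBit_invol (k : Fin n) : Function.Involutive (fun x => flipBit n x k) := by
  intro x
  funext i
  by_cases h : i = k
  · subst h; simp [flipBit]
  · simp [flipBit, Function.update_of_ne h]

lemma expect_comp_flip (F : (Fin n → Bool) → ℝ) (k : Fin n) :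
    _root_.expect n (fun x => F (flipBit n x k)) = _root_.expect n F := by
  unfold _root_.expect
  congr 1
  exact Fintype.sum_equiv (Function.Involutive.toPerm _ (flipBit_invol n k)) _ _ (fun x => rfl)

lemma chi_flip_not_mem {T : Finset (Fin n)} {k : Fin n} (hk : k ∉ T) (x : Fin n → Bool) :
    chi n T (flipBit n x k) = chi n T x := by
  unfold chi
  refine Finset.prod_congr rfl fun i hi => ?_
  have h : i ≠ k := fun h => hk (h ▸ hi)
  simp [flipBit, Function.update_of_ne h]

lemma chi_insert {T : Finset (Fin n)} {k : Fin n} (hk : k ∉ T) (x : Fin n → Bool) :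
    chi n (insert k T) x = (if x k then (-1:ℝ) else 1) * chi n T x :=
  Finset.prod_insert hk

lemma chi_flip_mem {S : Finset (Fin n)} {k : Fin n} (hk : k ∈ S) (x : Fin n → Bool) :
    chi n S (flipBit n x k) = - chi n S x := by
  rw [← Finset.insert_erase hk, chi_insert n (Finset.notMem_erase k S),
    chi_insert n (Finset.notMem_erase k S), chi_flip_not_mem n (Finset.notMem_erase k S)]
  have hfk : (flipBit n x k) k = !x k := Function.update_self k _ x
  rw [hfk]
  cases hx : x k <;> simp

lemma expect_sum {ι : Type*} (s : Finset ι) (h : ι → (Fin n → Bool) → ℝ) :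
    _root_.expect n (fun x => ∑ i ∈ s, h i x) = ∑ i ∈ s, _root_.expect n (h i) := by
  unfold _root_.expect
  rw [Finset.sum_comm, Finset.sum_div]

lemma expect_const_mul (c : ℝ) (h : (Fin n → Bool) → ℝ) :
    _root_.expect n (fun x => c * h x) = c * _root_.expect n h := by
  unfold _root_.expect
  rw [← Finset.mul_sum, mul_div_assoc]

lemma expect_add (a b : (Fin n → Bool) → ℝ) :
    _root_.expect n (fun x => a x + b x) = _root_.expect n a + _root_.expect n b := by
  unfold _root_.expect
  rw [Finset.sum_add_distrib, add_div]

lemma expect_chi_ne_empty {S : Finset (Fin n)} (hS : S.Nonempty) :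
    _root_.expect n (chi n S) = 0 := by
  obtain ⟨k, hk⟩ := hS
  have h1 : _root_.expect n (fun x => chi n S (flipBit n x k)) = _root_.expect n (chi n S) :=
    expect_comp_flip n _ k
  have h2 : _root_.expect n (fun x => chi n S (flipBit n x k)) = - _root_.expect n (chi n S) := by
    have : (fun x => chi n S (flipBit n x k)) = fun x => - chi n S x := by
      funext x; exact chi_flip_mem n hk x
    rw [this]
    unfold _root_.expect
    rw [Finset.sum_neg_distrib, neg_div]
  linarith [h1.symm.trans h2]

/-- discrete derivative -/
noncomputable def dk (k : Fin n) (f : (Fin n → Bool) → ℝ) (x : Fin n → Bool) : ℝ :=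
  (f (Function.update x k false) - f (Function.update x k true)) / 2

lemma coef_insert (f : (Fin n → Bool) → ℝ) {k : Fin n} {T : Finset (Fin n)} (hk : k ∉ T) :
    coef n f (insert k T) = coef n (dk n k f) T := by
  have key : ∀ x, f x * chi n (insert k T) x
      + f (flipBit n x k) * chi n (insert k T) (flipBit n x k)
      = 2 * (dk n k f x * chi n T x) := by
    intro x
    rw [chi_insert n hk, chi_insert n hk, chi_flip_not_mem n hk]
    have hfk : (flipBit n x k) k = !x k := Function.update_self k _ x
    rw [hfk]
    cases hx : x k
    · have h1 : Function.update x k false = x := by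
        conv_lhs => rw [← hx]
        exact Function.update_eq_self k x
      have h2 : flipBit n x k = Function.update x k true := by
        unfold flipBit; rw [hx]; rfl
      rw [h2]
      unfold dk
      rw [h1]
      norm_num
      ring
    · have h1 : Function.update x k true = x := by
        conv_lhs => rw [← hx]
        exact Function.update_eq_self k x
      have h2 : flipBit n x k = Function.update x k false := by
        unfold flipBit; rw [hx]; rfl
      rw [h2]
      unfold dk
      rw [h1]
      norm_num
      ring
  have h2 : (2:ℝ) * coef n f (insert k T) = 2 * coef n (dk n k f) T := by
    unfold coef
    calc (2:ℝ) * _root_.expect n (fun x => f x * chi n (insert k T) x)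
        = _root_.expect n (fun x => f x * chi n (insert k T) x)
          + _root_.expect n (fun x => f (flipBit n x k) * chi n (insert k T) (flipBit n x k)) := by
          rw [expect_comp_flip n (fun x => f x * chi n (insert k T) x) k]; ring
      _ = _root_.expect n (fun x => f x * chi n (insert k T) x
          + f (flipBit n x k) * chi n (insert k T) (flipBit n x k)) := (expect_add n _ _).symm
      _ = _root_.expect n (fun x => 2 * (dk n k f x * chi n T x)) := by
          congr 1; funext x; exact key x
      _ = 2 * _root_.expect n (fun x => dk n k f x * chi n T x) := expect_const_mul n _ _
  linarith
end Aux

section Main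
variable (n : ℕ)

lemma kernel_eq (ρ : ℝ) (A : Finset (Fin n)) (x y : Fin n → Bool) :
    ∑ T ∈ A.powerset, ρ ^ T.card * (chi n T x * chi n T y)
      = ∏ i ∈ A, (ρ * ((if x i then (-1:ℝ) else 1) * (if y i then (-1:ℝ) else 1)) + 1) := by
  rw [Finset.prod_add]
  refine Finset.sum_congr rfl fun T hT => ?_
  rw [Finset.prod_const_one, mul_one]
  calc ρ ^ T.card * (chi n T x * chi n T y)
      = (∏ _i ∈ T, ρ) * (∏ i ∈ T, ((if x i then (-1:ℝ) else 1) * (if y i then (-1:ℝ) else 1))) := by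
        rw [Finset.prod_const]
        unfold chi
        rw [Finset.prod_mul_distrib]
    _ = ∏ i ∈ T, (ρ * ((if x i then (-1:ℝ) else 1) * (if y i then (-1:ℝ) else 1))) :=
        Finset.prod_mul_distrib.symm

lemma key_pos {ρ : ℝ} (h0 : -1 ≤ ρ) (h1 : ρ ≤ 1) (A : Finset (Fin n))
    (h h' : (Fin n → Bool) → ℝ) (hh : ∀ x, 0 ≤ h x) (hh' : ∀ x, 0 ≤ h' x) :
    0 ≤ ∑ T ∈ A.powerset, ρ ^ T.card * (coef n h T * coef n h' T) := by
  have step1 : ∀ T : Finset (Fin n), ρ ^ T.card *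
      ((∑ x : Fin n → Bool, h x * chi n T x) * (∑ y : Fin n → Bool, h' y * chi n T y))
      = ∑ x : Fin n → Bool, ∑ y : Fin n → Bool,
          h x * h' y * (ρ ^ T.card * (chi n T x * chi n T y)) := by
    intro T
    rw [Finset.sum_mul_sum, Finset.mul_sum]
    refine Finset.sum_congr rfl fun x _ => ?_
    rw [Finset.mul_sum]
    exact Finset.sum_congr rfl fun y _ => by ring
  have hQ : 0 ≤ ∑ T ∈ A.powerset, ρ ^ T.card *
      ((∑ x : Fin n → Bool, h x * chi n T x) * (∑ y : Fin n → Bool, h' y * chi n T y)) := by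
    rw [Finset.sum_congr rfl fun T _ => step1 T]
    rw [Finset.sum_comm]
    refine Finset.sum_nonneg fun x _ => ?_
    rw [Finset.sum_comm]
    refine Finset.sum_nonneg fun y _ => ?_
    rw [← Finset.mul_sum, kernel_eq]
    refine mul_nonneg (mul_nonneg (hh x) (hh' y)) (Finset.prod_nonneg fun i _ => ?_)
    cases hx : x i <;> cases hy : y i <;> simp [hx, hy] <;> linarith
  have main : ∑ T ∈ A.powerset, ρ ^ T.card * (coef n h T * coef n h' T)
      = (∑ T ∈ A.powerset, ρ ^ T.card *
          ((∑ x : Fin n → Bool, h x * chi n T x) * (∑ y : Fin n → Bool, h' y * chi n T y)))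
        / ((2:ℝ)^n * (2:ℝ)^n) := by
    rw [Finset.sum_div]
    refine Finset.sum_congr rfl fun T _ => ?_
    unfold coef _root_.expect
    field_simp
  rw [main]
  exact div_nonneg hQ (by positivity)

lemma inner_formula (ρ : ℝ) (f g : (Fin n → Bool) → ℝ) :
    _root_.expect n (fun x => noise n ρ f x * g x)
      = ∑ S : Finset (Fin n), ρ ^ S.card * (coef n f S * coef n g S) := by
  have h1 : ∀ x, noise n ρ f x * g x
      = ∑ S : Finset (Fin n), (ρ ^ S.card * coef n f S) * (g x * chi n S x) := by
    intro x
    unfold noise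
    rw [Finset.sum_mul]
    exact Finset.sum_congr rfl fun S _ => by ring
  calc _root_.expect n (fun x => noise n ρ f x * g x)
      = _root_.expect n (fun x => ∑ S : Finset (Fin n),
          (ρ ^ S.card * coef n f S) * (g x * chi n S x)) := by
        congr 1; funext x; exact h1 x
    _ = ∑ S : Finset (Fin n), (ρ ^ S.card * coef n f S) * coef n g S := by
        rw [expect_sum]
        exact Finset.sum_congr rfl fun S _ => expect_const_mul n _ _
    _ = _ := Finset.sum_congr rfl fun S _ => by ring

lemma expect_noise (ρ : ℝ) (f : (Fin n → Bool) → ℝ) :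
    _root_.expect n (noise n ρ f) = _root_.expect n f := by
  have h1 : _root_.expect n (noise n ρ f)
      = ∑ S : Finset (Fin n), (ρ ^ S.card * coef n f S) * _root_.expect n (chi n S) := by
    unfold noise
    rw [expect_sum]
    exact Finset.sum_congr rfl fun S _ => expect_const_mul n _ _
  rw [h1, Finset.sum_eq_single ∅]
  · simp [coef, chi, _root_.expect]
  · intro S _ hS
    rw [expect_chi_ne_empty n (Finset.nonempty_iff_ne_empty.mpr hS), mul_zero]
  · intro hmem
    exact absurd (Finset.mem_univ ∅) hmem

lemma coef_neg (p : (Fin n → Bool) → ℝ) (T : Finset (Fin n)) :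
    coef n (fun x => -(p x)) T = - coef n p T := by
  simp [coef, _root_.expect, neg_div, Finset.sum_neg_distrib]

lemma dk_nonpos (k : Fin n) {f : (Fin n → Bool) → ℝ} (hf : Monotone f) (x : Fin n → Bool) :
    dk n k f x ≤ 0 := by
  unfold dk
  have hle : Function.update x k false ≤ Function.update x k true := by
    intro i
    by_cases h : i = k
    · subst h; simp
    · simp [Function.update_of_ne h]
  linarith [hf hle]

lemma deriv_sum_nonneg (f g : (Fin n → Bool) → ℝ) (hf : Monotone f) (hg : Monotone g)
    {ρ : ℝ} (h0 : -1 ≤ ρ) (h1 : ρ ≤ 1) :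
    0 ≤ ∑ S : Finset (Fin n),
        ((S.card : ℝ) * ρ ^ (S.card - 1)) * (coef n f S * coef n g S) := by
  have step1 : ∀ S : Finset (Fin n),
      ((S.card : ℝ) * ρ ^ (S.card - 1)) * (coef n f S * coef n g S)
      = ∑ k : Fin n, if k ∈ S then ρ ^ (S.card - 1) * (coef n f S * coef n g S) else 0 := by
    intro S
    rw [Finset.sum_ite_mem, Finset.univ_inter, Finset.sum_const, nsmul_eq_mul, mul_assoc]
  rw [Finset.sum_congr rfl fun S _ => step1 S, Finset.sum_comm]
  refine Finset.sum_nonneg fun k _ => ?_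
  rw [← Finset.sum_filter]
  have hbij : ∑ S ∈ Finset.univ.filter (fun S => k ∈ S),
        ρ ^ (S.card - 1) * (coef n f S * coef n g S)
      = ∑ T ∈ ((Finset.univ : Finset (Fin n)).erase k).powerset,
        ρ ^ T.card * (coef n f (insert k T) * coef n g (insert k T)) := by
    refine Finset.sum_nbij' (fun S => S.erase k) (fun T => insert k T) ?_ ?_ ?_ ?_ ?_
    · intro S hS
      exact Finset.mem_powerset.mpr (Finset.erase_subset_erase k (Finset.subset_univ S))
    · intro T hT
      exact Finset.mem_filter.mpr ⟨Finset.mem_univ _, Finset.mem_insert_self k T⟩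
    · intro S hS
      exact Finset.insert_erase (Finset.mem_filter.mp hS).2
    · intro T hT
      have hk : k ∉ T := fun h =>
        (Finset.notMem_erase k Finset.univ) (Finset.mem_powerset.mp hT h)
      exact Finset.erase_insert hk
    · intro S hS
      have hk : k ∈ S := (Finset.mem_filter.mp hS).2
      rw [Finset.insert_erase hk, Finset.card_erase_of_mem hk]
  rw [hbij]
  have hrw : ∀ T ∈ ((Finset.univ : Finset (Fin n)).erase k).powerset,
      ρ ^ T.card * (coef n f (insert k T) * coef n g (insert k T))
      = ρ ^ T.card * (coef n (fun x => -(dk n k f x)) T * coef n (fun x => -(dk n k g x)) T) := by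
    intro T hT
    have hk : k ∉ T := fun h =>
      (Finset.notMem_erase k Finset.univ) (Finset.mem_powerset.mp hT h)
    rw [coef_insert n f hk, coef_insert n g hk, coef_neg, coef_neg, neg_mul_neg]
  rw [Finset.sum_congr rfl hrw]
  exact key_pos n h0 h1 _ _ _
    (fun x => neg_nonneg.mpr (dk_nonpos n k hf x))
    (fun x => neg_nonneg.mpr (dk_nonpos n k hg x))

end Main

/-- Noise decreases correlation: for increasing `f, g : {0,1}^n → ℝ`, the maps
`ρ ↦ ⟨T_ρ f, g⟩` and (equivalently) `ρ ↦ Cov(T_ρ f, g)` are non-decreasing on `[0,1]`. -/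
theorem noise_decreases_correlation (n : ℕ) (f g : (Fin n → Bool) → ℝ)
    (hf : Monotone f) (hg : Monotone g) :
    MonotoneOn (fun ρ : ℝ => expect n (fun x => noise n ρ f x * g x))
      (Set.Icc (0 : ℝ) 1) ∧
    MonotoneOn (fun ρ : ℝ => cov n (noise n ρ f) g) (Set.Icc (0 : ℝ) 1) := by
  set P : ℝ → ℝ := fun ρ => ∑ S : Finset (Fin n), ρ ^ S.card * (coef n f S * coef n g S)
    with hPdef
  have hd : ∀ ρ : ℝ, HasDerivAt P
      (∑ S : Finset (Fin n), ((S.card : ℝ) * ρ ^ (S.card - 1)) * (coef n f S * coef n g S)) ρ :=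
    fun ρ => HasDerivAt.fun_sum fun S _ => (hasDerivAt_pow S.card ρ).mul_const _
  have hdiff : Differentiable ℝ P := fun ρ => (hd ρ).differentiableAt
  have hmono : MonotoneOn P (Set.Icc (0:ℝ) 1) := by
    apply monotoneOn_of_deriv_nonneg (convex_Icc 0 1) hdiff.continuous.continuousOn
      hdiff.differentiableOn
    intro ρ hρ
    rw [interior_Icc] at hρ
    rw [(hd ρ).deriv]
    exact deriv_sum_nonneg n f g hf hg (by linarith [hρ.1]) (le_of_lt hρ.2)
  have hEq : (fun ρ : ℝ => _root_.expect n (fun x => noise n ρ f x * g x)) = P :=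
    funext fun ρ => inner_formula n ρ f g
  refine ⟨hEq ▸ hmono, ?_⟩
  have hcov : (fun ρ : ℝ => cov n (noise n ρ f) g)
      = fun ρ => P ρ - _root_.expect n f * _root_.expect n g := by
    funext ρ
    unfold cov
    rw [expect_noise n ρ f]
    congr 1
    exact inner_formula n ρ f g
  rw [hcov]
  intro a ha b hb hab
  simp only
  have := hmono ha hb hab
  linarith
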